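/- Under an exponential trichotomy, for f ∈ BC_s^η with 0 < η < min{−a,b}, the function u = K_s^η f is the unique solution in BC_s^η of the inhomogeneous equation u(t) = U(t,s)u(s) + ∫ₛᵗ U(t,τ)f(τ)dτ satisfying π₀(s)u(s) = 0. -/

import Mathlib

open MeasureTheory Set Filter Real Topology

private lemma exp_deriv_aux1 (δ c x : ℝ) :
    HasDerivAt (fun τ : ℝ => Real.exp (-(δ * (τ - c)))) (Real.exp (-(δ * (x - c))) * (-δ)) x := by
  simpa using ((((hasDerivAt_id x).sub_const c).const_mul δ).neg).exp

private lemma exp_deriv1 {δ : ℝ} (hδ : 0 < δ) (c x : ℝ) :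
    HasDerivAt (fun τ : ℝ => -δ⁻¹ * Real.exp (-(δ * (τ - c)))) (Real.exp (-(δ * (x - c)))) x := by
  have h := (exp_deriv_aux1 δ c x).const_mul (-δ⁻¹)
  exact h.congr_deriv (by
    rw [mul_comm (Real.exp _) (-δ), ← mul_assoc, neg_mul_neg, inv_mul_cancel₀ hδ.ne', one_mul])

private lemma exp_deriv_aux2 (δ c x : ℝ) :
    HasDerivAt (fun τ : ℝ => Real.exp (-(δ * (c - τ)))) (Real.exp (-(δ * (c - x))) * δ) x := by
  have h1 : HasDerivAt (fun τ : ℝ => c - τ) (-1) x := by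
    simpa using (hasDerivAt_id x).const_sub c
  have := ((h1.const_mul δ).neg).exp
  simpa using this

private lemma exp_deriv2 {δ : ℝ} (hδ : 0 < δ) (c x : ℝ) :
    HasDerivAt (fun τ : ℝ => δ⁻¹ * Real.exp (-(δ * (c - τ)))) (Real.exp (-(δ * (c - x)))) x := by
  have h := (exp_deriv_aux2 δ c x).const_mul δ⁻¹
  exact h.congr_deriv (by
    rw [mul_comm (Real.exp _) δ, ← mul_assoc, inv_mul_cancel₀ hδ.ne', one_mul])

private lemma expdecay_int_Ici {δ : ℝ} (hδ : 0 < δ) (c : ℝ) :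
    IntegrableOn (fun τ => Real.exp (-(δ * (τ - c)))) (Ici c) := by
  rw [integrableOn_Ici_iff_integrableOn_Ioi]
  have h : IntegrableOn (fun x => Real.exp (δ * c) * Real.exp (-δ * x)) (Ioi c) :=
    (exp_neg_integrableOn_Ioi c hδ).const_mul (Real.exp (δ * c))
  refine IntegrableOn.congr_fun h (fun x _ => ?_) measurableSet_Ioi
  rw [← Real.exp_add]; ring_nf

private lemma expdecay_int_Iic {δ : ℝ} (hδ : 0 < δ) (c : ℝ) :
    IntegrableOn (fun τ => Real.exp (-(δ * (c - τ)))) (Iic c) := by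
  have h := expdecay_int_Ici hδ (-c)
  have h2 := (MeasurePreserving.integrableOn_comp_preimage
      (Measure.measurePreserving_neg (volume : Measure ℝ))
      (Homeomorph.neg ℝ).measurableEmbedding).2 h
  have hs : (Neg.neg ⁻¹' (Ici (-c)) : Set ℝ) = Iic c := by
    ext x; simp
  rw [hs] at h2
  refine IntegrableOn.congr_fun h2 (fun x _ => ?_) measurableSet_Iic
  simp only [Function.comp]
  ring_nf

private lemma expdecay_val_Ici {δ : ℝ} (hδ : 0 < δ) (c : ℝ) :
    ∫ τ in Ici c, Real.exp (-(δ * (τ - c))) = δ⁻¹ := by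
  rw [integral_Ici_eq_integral_Ioi]
  have hlim : Tendsto (fun x : ℝ => -δ⁻¹ * Real.exp (-(δ * (x - c)))) atTop (𝓝 0) := by
    have h1 : Tendsto (fun x : ℝ => -(δ * (x - c))) atTop atBot := by
      apply tendsto_neg_atTop_atBot.comp
      exact (tendsto_atTop_add_const_right atTop (-c) tendsto_id).const_mul_atTop hδ
    have h2 := Real.tendsto_exp_atBot.comp h1
    have h3 := h2.const_mul (-δ⁻¹)
    simpa using h3
  have h := integral_Ioi_of_hasDerivAt_of_tendsto' (f' := fun x => Real.exp (-(δ * (x - c))))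
    (fun x _ => exp_deriv1 hδ c x)
    ((expdecay_int_Ici hδ c).mono_set Ioi_subset_Ici_self) hlim
  rw [h]; simp

private lemma expdecay_val_Iic {δ : ℝ} (hδ : 0 < δ) (c : ℝ) :
    ∫ τ in Iic c, Real.exp (-(δ * (c - τ))) = δ⁻¹ := by
  have hlim : Tendsto (fun x : ℝ => δ⁻¹ * Real.exp (-(δ * (c - x)))) atBot (𝓝 0) := by
    have h1 : Tendsto (fun x : ℝ => -(δ * (c - x))) atBot atBot := by
      have h0 : Tendsto (fun x : ℝ => δ * x + -(δ * c)) atBot atBot :=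
        tendsto_atBot_add_const_right atBot (-(δ * c)) (tendsto_id.const_mul_atBot hδ)
      exact h0.congr (fun x => by ring)
    have h2 := Real.tendsto_exp_atBot.comp h1
    have h3 := h2.const_mul δ⁻¹
    simpa using h3
  have h := integral_Iic_of_hasDerivAt_of_tendsto' (f' := fun x => Real.exp (-(δ * (c - x))))
    (fun x _ => exp_deriv2 hδ c x) (expdecay_int_Iic hδ c) hlim
  rw [h]; simp

private lemma exp_iv_le1 {δ c d : ℝ} (hδ : 0 < δ) (h : c ≤ d) :
    ∫ τ in c..d, Real.exp (-(δ * (d - τ))) ≤ δ⁻¹ := by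
  have hftc := intervalIntegral.integral_eq_sub_of_hasDerivAt
    (f := fun τ : ℝ => δ⁻¹ * Real.exp (-(δ * (d - τ))))
    (fun x _ => exp_deriv2 hδ d x)
    ((Real.continuous_exp.comp (by continuity)).intervalIntegrable c d)
  rw [hftc]
  simp only [sub_self, mul_zero, neg_zero, Real.exp_zero, mul_one]
  have : 0 ≤ δ⁻¹ * Real.exp (-(δ * (d - c))) := by positivity
  linarith

private lemma exp_iv_le2 {δ c d : ℝ} (hδ : 0 < δ) (h : c ≤ d) :
    ∫ τ in c..d, Real.exp (-(δ * (τ - c))) ≤ δ⁻¹ := by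
  have hftc := intervalIntegral.integral_eq_sub_of_hasDerivAt
    (f := fun τ : ℝ => -δ⁻¹ * Real.exp (-(δ * (τ - c))))
    (fun x _ => exp_deriv1 hδ c x)
    ((Real.continuous_exp.comp (by continuity)).intervalIntegrable c d)
  rw [hftc]
  simp only [sub_self, mul_zero, neg_zero, Real.exp_zero, mul_one]
  have : 0 ≤ δ⁻¹ * Real.exp (-(δ * (d - c))) := by positivity
  linarith

private lemma integral_Ici_sub_Ici' {E : Type*} [NormedAddCommGroup E] [NormedSpace ℝ E]
    {f : ℝ → E} {a b : ℝ} (ha : IntegrableOn f (Ici a)) (hb : IntegrableOn f (Ici b)) :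
    (∫ x in Ici a, f x) - ∫ x in Ici b, f x = ∫ x in a..b, f x := by
  wlog hab : a ≤ b generalizing a b
  · rw [intervalIntegral.integral_symm, ← this hb ha (le_of_not_ge hab), neg_sub]
  rw [sub_eq_iff_eq_add, intervalIntegral.integral_of_le hab,
    ← setIntegral_congr_set (Ico_ae_eq_Ioc (a := a) (b := b) (μ := volume)),
    ← setIntegral_union (Set.disjoint_left.mpr fun x hx hx' => hx.2.not_ge hx') measurableSet_Ici
      (ha.mono_set Set.Ico_subset_Ici_self) hb,
    Set.Ico_union_Ici_eq_Ici hab]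

set_option maxHeartbeats 1000000 in
/-- `u = K_s^η f` is the unique solution in `BC_s^η` of the linear inhomogeneous equation
`u t = U t s (u s) + ∫_s^t U t τ (f τ) dτ` with vanishing `E₀(s)`-component `π₀ s (u s) = 0`. -/
theorem stmt_9 {n : ℕ}
    (U : ℝ → ℝ → ((Fin n → ℝ) →L[ℝ] (Fin n → ℝ)))
    (πm π0 πp : ℝ → ((Fin n → ℝ) →L[ℝ] (Fin n → ℝ)))
    (hUcont : Continuous fun p : ℝ × ℝ => U p.1 p.2)
    (hπm : Continuous πm) (hπ0 : Continuous π0) (hπp : Continuous πp)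
    (hcocycle : ∀ t r s : ℝ, (U t r).comp (U r s) = U t s)
    (hid : ∀ s : ℝ, U s s = ContinuousLinearMap.id ℝ (Fin n → ℝ))
    (hsum : ∀ t : ℝ, πm t + π0 t + πp t = ContinuousLinearMap.id ℝ (Fin n → ℝ))
    (horth : ∀ t : ℝ, (πm t).comp (π0 t) = 0 ∧ (π0 t).comp (πp t) = 0 ∧
      (πp t).comp (πm t) = 0 ∧ (π0 t).comp (πm t) = 0 ∧ (πp t).comp (π0 t) = 0 ∧
      (πm t).comp (πp t) = 0)
    (hcomm : ∀ t s : ℝ, (U t s).comp (πm s) = (πm t).comp (U t s) ∧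
      (U t s).comp (π0 s) = (π0 t).comp (U t s) ∧ (U t s).comp (πp s) = (πp t).comp (U t s))
    (N : ℝ) (hN : ∀ t : ℝ, ‖πm t‖ ≤ N ∧ ‖π0 t‖ ≤ N ∧ ‖πp t‖ ≤ N)
    (a b : ℝ) (ha : a < 0) (hb : 0 < b)
    (htri : ∀ ε : ℝ, 0 < ε → ∃ C : ℝ, 0 < C ∧
      (∀ t s : ℝ, s ≤ t → ‖(U t s).comp (πm s)‖ ≤ C * Real.exp (a * (t - s))) ∧
      (∀ t s : ℝ, ‖(U t s).comp (π0 s)‖ ≤ C * Real.exp (ε * |t - s|)) ∧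
      (∀ t s : ℝ, t ≤ s → ‖(U t s).comp (πp s)‖ ≤ C * Real.exp (b * (t - s))))
    (η : ℝ) (hη0 : 0 < η) (hηa : η < -a) (hηb : η < b)
    (s : ℝ) (f : ℝ → (Fin n → ℝ)) (hf : Continuous f)
    (M : ℝ) (hfM : ∀ t : ℝ, Real.exp (-η * |t - s|) * ‖f t‖ ≤ M)
    (u : ℝ → (Fin n → ℝ))
    (hu : ∀ t : ℝ, u t = (∫ τ in s..t, U t τ (π0 τ (f τ)))
        - (∫ τ in Set.Ici t, U t τ (πp τ (f τ)))
        + ∫ τ in Set.Iic t, U t τ (πm τ (f τ))) :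
    (∀ t : ℝ, u t = U t s (u s) + ∫ τ in s..t, U t τ (f τ)) ∧
    π0 s (u s) = 0 ∧
    (∃ C : ℝ, ∀ t : ℝ, Real.exp (-η * |t - s|) * ‖u t‖ ≤ C) ∧
    (∀ v : ℝ → (Fin n → ℝ), Continuous v →
      (∃ C : ℝ, ∀ t : ℝ, Real.exp (-η * |t - s|) * ‖v t‖ ≤ C) →
      (∀ t : ℝ, v t = U t s (v s) + ∫ τ in s..t, U t τ (f τ)) →
      π0 s (v s) = 0 → v = u) := by
  obtain ⟨C, hC, hCm, hC0, hCp⟩ := htri (η / 2) (by positivity)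
  set δp := b - η with hδpdef
  set δm := -a - η with hδmdef
  have hδp : 0 < δp := by simp [hδpdef]; linarith
  have hδm : 0 < δm := by simp [hδmdef]; linarith
  have hη2 : (0:ℝ) < η / 2 := by positivity
  -- general inversion of the weighted bound
  have hinv : ∀ (K : ℝ) (g : ℝ → Fin n → ℝ),
      (∀ t : ℝ, Real.exp (-η * |t - s|) * ‖g t‖ ≤ K) →
      ∀ t : ℝ, ‖g t‖ ≤ K * Real.exp (η * |t - s|) := by
    intro K g hK t
    have h := hK t
    have hp := Real.exp_pos (η * |t - s|)
    rw [neg_mul, Real.exp_neg] at h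
    calc ‖g t‖ = Real.exp (η * |t - s|) * ((Real.exp (η * |t - s|))⁻¹ * ‖g t‖) := by
          field_simp
      _ ≤ Real.exp (η * |t - s|) * K := mul_le_mul_of_nonneg_left h hp.le
      _ = K * Real.exp (η * |t - s|) := mul_comm _ _
  have hM0 : 0 ≤ M := le_trans (by positivity) (hfM s)
  have hfb : ∀ τ : ℝ, ‖f τ‖ ≤ M * Real.exp (η * |τ - s|) := hinv M f hfM
  -- continuity of the integrands
  have hgc : ∀ (P : ℝ → ((Fin n → ℝ) →L[ℝ] (Fin n → ℝ))), Continuous P →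
      ∀ r : ℝ, Continuous fun τ => U r τ (P τ (f τ)) := by
    intro P hP r
    exact (hUcont.comp (continuous_const.prodMk continuous_id)).clm_apply (hP.clm_apply hf)
  -- pointwise norm bounds
  have hbp : ∀ t τ : ℝ, t ≤ τ →
      ‖U t τ (πp τ (f τ))‖ ≤ C * M * Real.exp (η * |t - s|) * Real.exp (-(δp * (τ - t))) := by
    intro t τ htτ
    have h2 : ‖U t τ (πp τ (f τ))‖ ≤ ‖(U t τ).comp (πp τ)‖ * ‖f τ‖ :=
      ((U t τ).comp (πp τ)).le_opNorm (f τ)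
    have habs : |τ - s| ≤ (τ - t) + |t - s| := by
      have h := abs_sub_le τ t s
      rwa [abs_of_nonneg (by linarith : (0:ℝ) ≤ τ - t)] at h
    calc ‖U t τ (πp τ (f τ))‖ ≤ (C * Real.exp (b * (t - τ))) * (M * Real.exp (η * |τ - s|)) :=
          le_trans h2 (mul_le_mul (hCp t τ htτ) (hfb τ) (norm_nonneg _)
            (by positivity))
      _ = C * M * Real.exp (b * (t - τ) + η * |τ - s|) := by rw [Real.exp_add]; ring
      _ ≤ C * M * Real.exp (η * |t - s| + -(δp * (τ - t))) := by
          have h3 : η * |τ - s| ≤ η * ((τ - t) + |t - s|) :=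
            mul_le_mul_of_nonneg_left habs hη0.le
          apply mul_le_mul_of_nonneg_left (Real.exp_le_exp.2 (by simp [hδpdef] at *; nlinarith))
            (by positivity)
      _ = C * M * Real.exp (η * |t - s|) * Real.exp (-(δp * (τ - t))) := by
          rw [Real.exp_add]; ring
  have hbm : ∀ t τ : ℝ, τ ≤ t →
      ‖U t τ (πm τ (f τ))‖ ≤ C * M * Real.exp (η * |t - s|) * Real.exp (-(δm * (t - τ))) := by
    intro t τ hτt
    have h2 : ‖U t τ (πm τ (f τ))‖ ≤ ‖(U t τ).comp (πm τ)‖ * ‖f τ‖ :=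
      ((U t τ).comp (πm τ)).le_opNorm (f τ)
    have habs : |τ - s| ≤ (t - τ) + |t - s| := by
      have h := abs_sub_le τ t s
      rwa [abs_sub_comm τ t, abs_of_nonneg (by linarith : (0:ℝ) ≤ t - τ)] at h
    calc ‖U t τ (πm τ (f τ))‖ ≤ (C * Real.exp (a * (t - τ))) * (M * Real.exp (η * |τ - s|)) :=
          le_trans h2 (mul_le_mul (hCm t τ hτt) (hfb τ) (norm_nonneg _)
            (by positivity))
      _ = C * M * Real.exp (a * (t - τ) + η * |τ - s|) := by rw [Real.exp_add]; ring
      _ ≤ C * M * Real.exp (η * |t - s| + -(δm * (t - τ))) := by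
          have h3 : η * |τ - s| ≤ η * ((t - τ) + |t - s|) :=
            mul_le_mul_of_nonneg_left habs hη0.le
          apply mul_le_mul_of_nonneg_left (Real.exp_le_exp.2 (by simp [hδmdef] at *; nlinarith))
            (by positivity)
      _ = C * M * Real.exp (η * |t - s|) * Real.exp (-(δm * (t - τ))) := by
          rw [Real.exp_add]; ring
  -- integrability
  have hIp : ∀ r t : ℝ, IntegrableOn (fun τ => U r τ (πp τ (f τ))) (Ici t) := by
    have base : ∀ t : ℝ, IntegrableOn (fun τ => U t τ (πp τ (f τ))) (Ici t) := by
      intro t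
      refine Integrable.mono' ((expdecay_int_Ici hδp t).const_mul
        (C * M * Real.exp (η * |t - s|)))
        ((hgc πp hπp t).aestronglyMeasurable) ?_
      filter_upwards [ae_restrict_mem measurableSet_Ici] with τ hτ
      exact hbp t τ hτ
    intro r t
    have heqf : (fun τ => U r τ (πp τ (f τ))) = fun τ => (U r t) (U t τ (πp τ (f τ))) := by
      funext τ
      rw [← hcocycle r t τ]; rfl
    rw [heqf]
    exact (U r t).integrable_comp (base t)
  have hIm : ∀ r t : ℝ, IntegrableOn (fun τ => U r τ (πm τ (f τ))) (Iic t) := by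
    have base : ∀ t : ℝ, IntegrableOn (fun τ => U t τ (πm τ (f τ))) (Iic t) := by
      intro t
      refine Integrable.mono' ((expdecay_int_Iic hδm t).const_mul
        (C * M * Real.exp (η * |t - s|)))
        ((hgc πm hπm t).aestronglyMeasurable) ?_
      filter_upwards [ae_restrict_mem measurableSet_Iic] with τ hτ
      exact hbm t τ hτ
    intro r t
    have heqf : (fun τ => U r τ (πm τ (f τ))) = fun τ => (U r t) (U t τ (πm τ (f τ))) := by
      funext τ
      rw [← hcocycle r t τ]; rfl
    rw [heqf]
    exact (U r t).integrable_comp (base t)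
  -- Part 2 : π0 s (u s) = 0
  have hus : u s = 0 - (∫ τ in Set.Ici s, U s τ (πp τ (f τ)))
      + ∫ τ in Set.Iic s, U s τ (πm τ (f τ)) := by
    have h := hu s
    rwa [intervalIntegral.integral_same] at h
  have hz1 : ∀ τ : ℝ, π0 s (U s τ (πp τ (f τ))) = 0 := by
    intro τ
    have hcz : (π0 s).comp ((U s τ).comp (πp τ)) = 0 := by
      rw [← ContinuousLinearMap.comp_assoc, ← (hcomm s τ).2.1, ContinuousLinearMap.comp_assoc,
        (horth τ).2.1, ContinuousLinearMap.comp_zero]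
    calc π0 s (U s τ (πp τ (f τ))) = ((π0 s).comp ((U s τ).comp (πp τ))) (f τ) := rfl
      _ = 0 := by rw [hcz]; rfl
  have hz2 : ∀ τ : ℝ, π0 s (U s τ (πm τ (f τ))) = 0 := by
    intro τ
    have hcz : (π0 s).comp ((U s τ).comp (πm τ)) = 0 := by
      rw [← ContinuousLinearMap.comp_assoc, ← (hcomm s τ).2.1, ContinuousLinearMap.comp_assoc,
        (horth τ).2.2.2.1, ContinuousLinearMap.comp_zero]
    calc π0 s (U s τ (πm τ (f τ))) = ((π0 s).comp ((U s τ).comp (πm τ))) (f τ) := rfl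
      _ = 0 := by rw [hcz]; rfl
  have hπ0us : π0 s (u s) = 0 := by
    have e1 : π0 s (∫ τ in Set.Ici s, U s τ (πp τ (f τ))) = 0 := by
      rw [← ContinuousLinearMap.integral_comp_comm _ (hIp s s)]
      simp only [hz1, MeasureTheory.integral_zero]
    have e2 : π0 s (∫ τ in Set.Iic s, U s τ (πm τ (f τ))) = 0 := by
      rw [← ContinuousLinearMap.integral_comp_comm _ (hIm s s)]
      simp only [hz2, MeasureTheory.integral_zero]
    rw [hus, map_add, map_sub, map_zero, e1, e2]
    simp
  -- Part 1 : the integral equation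
  have heq : ∀ t : ℝ, u t = U t s (u s) + ∫ τ in s..t, U t τ (f τ) := by
    intro t
    have hUp : U t s (∫ τ in Set.Ici s, U s τ (πp τ (f τ)))
        = ∫ τ in Set.Ici s, U t τ (πp τ (f τ)) := by
      rw [← ContinuousLinearMap.integral_comp_comm _ (hIp s s)]
      refine MeasureTheory.integral_congr_ae (Filter.Eventually.of_forall fun τ => ?_)
      show U t s (U s τ (πp τ (f τ))) = U t τ (πp τ (f τ))
      rw [← hcocycle t s τ]; rfl
    have hUm : U t s (∫ τ in Set.Iic s, U s τ (πm τ (f τ)))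
        = ∫ τ in Set.Iic s, U t τ (πm τ (f τ)) := by
      rw [← ContinuousLinearMap.integral_comp_comm _ (hIm s s)]
      refine MeasureTheory.integral_congr_ae (Filter.Eventually.of_forall fun τ => ?_)
      show U t s (U s τ (πm τ (f τ))) = U t τ (πm τ (f τ))
      rw [← hcocycle t s τ]; rfl
    have hsplitp : (∫ τ in Set.Ici s, U t τ (πp τ (f τ)))
        - ∫ τ in Set.Ici t, U t τ (πp τ (f τ)) = ∫ τ in s..t, U t τ (πp τ (f τ)) :=
      integral_Ici_sub_Ici' (hIp t s) (hIp t t)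
    have hsplitm : (∫ τ in Set.Iic t, U t τ (πm τ (f τ)))
        - ∫ τ in Set.Iic s, U t τ (πm τ (f τ)) = ∫ τ in s..t, U t τ (πm τ (f τ)) :=
      intervalIntegral.integral_Iic_sub_Iic (hIm t s) (hIm t t)
    have hcomb : (∫ τ in s..t, U t τ (π0 τ (f τ))) + (∫ τ in s..t, U t τ (πp τ (f τ)))
        + (∫ τ in s..t, U t τ (πm τ (f τ))) = ∫ τ in s..t, U t τ (f τ) := by
      rw [← intervalIntegral.integral_add ((hgc π0 hπ0 t).intervalIntegrable s t)
          ((hgc πp hπp t).intervalIntegrable s t),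
        ← intervalIntegral.integral_add (f := fun τ => U t τ (π0 τ (f τ)) + U t τ (πp τ (f τ)))
          (g := fun τ => U t τ (πm τ (f τ)))
          (((hgc π0 hπ0 t).add (hgc πp hπp t)).intervalIntegrable s t)
          ((hgc πm hπm t).intervalIntegrable s t)]
      apply intervalIntegral.integral_congr
      intro τ _
      show U t τ (π0 τ (f τ)) + U t τ (πp τ (f τ)) + U t τ (πm τ (f τ)) = U t τ (f τ)
      have h := ContinuousLinearMap.ext_iff.1 (hsum τ) (f τ)
      simp only [ContinuousLinearMap.add_apply, ContinuousLinearMap.id_apply] at h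
      conv_rhs => rw [← h]
      rw [map_add, map_add]
      abel
    rw [hu t, hus, map_add, map_sub, map_zero, hUp, hUm, ← hcomb, ← hsplitp, ← hsplitm]
    abel
  -- Part 3 : the weighted bound
  have hb0' : ∀ t τ : ℝ,
      ‖U t τ (π0 τ (f τ))‖ ≤ C * M * Real.exp (η / 2 * |t - τ| + η * |τ - s|) := by
    intro t τ
    have h2 : ‖U t τ (π0 τ (f τ))‖ ≤ ‖(U t τ).comp (π0 τ)‖ * ‖f τ‖ :=
      ((U t τ).comp (π0 τ)).le_opNorm (f τ)
    calc ‖U t τ (π0 τ (f τ))‖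
        ≤ (C * Real.exp (η / 2 * |t - τ|)) * (M * Real.exp (η * |τ - s|)) :=
          le_trans h2 (mul_le_mul (hC0 t τ) (hfb τ) (norm_nonneg _) (by positivity))
      _ = C * M * Real.exp (η / 2 * |t - τ| + η * |τ - s|) := by rw [Real.exp_add]; ring
  set Cu : ℝ := C * M * ((η / 2)⁻¹ + δp⁻¹ + δm⁻¹) with hCudef
  have hCM : 0 ≤ C * M := by positivity
  have hCu : ∀ t : ℝ, Real.exp (-η * |t - s|) * ‖u t‖ ≤ Cu := by
    intro t
    set X := C * M * Real.exp (η * |t - s|) with hXdef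
    have hX0 : 0 ≤ X := by positivity
    -- bound for the Ici piece
    have hP : ‖∫ τ in Set.Ici t, U t τ (πp τ (f τ))‖ ≤ X * δp⁻¹ := by
      have h1 : ‖∫ τ in Set.Ici t, U t τ (πp τ (f τ))‖
          ≤ ∫ τ in Set.Ici t, X * Real.exp (-(δp * (τ - t))) := by
        apply MeasureTheory.norm_integral_le_of_norm_le ((expdecay_int_Ici hδp t).const_mul X)
        filter_upwards [ae_restrict_mem measurableSet_Ici] with τ hτ
        exact hbp t τ hτ
      rwa [MeasureTheory.integral_const_mul, expdecay_val_Ici hδp t] at h1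
    have hQ : ‖∫ τ in Set.Iic t, U t τ (πm τ (f τ))‖ ≤ X * δm⁻¹ := by
      have h1 : ‖∫ τ in Set.Iic t, U t τ (πm τ (f τ))‖
          ≤ ∫ τ in Set.Iic t, X * Real.exp (-(δm * (t - τ))) := by
        apply MeasureTheory.norm_integral_le_of_norm_le ((expdecay_int_Iic hδm t).const_mul X)
        filter_upwards [ae_restrict_mem measurableSet_Iic] with τ hτ
        exact hbm t τ hτ
      rwa [MeasureTheory.integral_const_mul, expdecay_val_Iic hδm t] at h1
    have hR : ‖∫ τ in s..t, U t τ (π0 τ (f τ))‖ ≤ X * (η / 2)⁻¹ := by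
      rcases le_total s t with hst | hts
      · have h1 : ‖∫ τ in s..t, U t τ (π0 τ (f τ))‖
            ≤ |∫ τ in s..t, X * Real.exp (-(η / 2 * (t - τ)))| := by
          apply intervalIntegral.norm_integral_le_abs_of_norm_le
          · filter_upwards [ae_restrict_mem measurableSet_uIoc] with τ hτ
            rw [Set.uIoc_of_le hst] at hτ
            have habs1 : |t - τ| = t - τ := abs_of_nonneg (by linarith [hτ.2])
            have habs2 : |τ - s| = τ - s := abs_of_nonneg (by linarith [hτ.1])
            have habs3 : |t - s| = t - s := abs_of_nonneg (by linarith)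
            calc ‖U t τ (π0 τ (f τ))‖ ≤ C * M * Real.exp (η / 2 * |t - τ| + η * |τ - s|) :=
                  hb0' t τ
              _ ≤ C * M * Real.exp (η * |t - s| + -(η / 2 * (t - τ))) := by
                  apply mul_le_mul_of_nonneg_left (Real.exp_le_exp.2 ?_) hCM
                  rw [habs1, habs2, habs3]; linarith
              _ = X * Real.exp (-(η / 2 * (t - τ))) := by rw [hXdef, Real.exp_add]; ring
          · exact ((continuous_const.mul (Real.continuous_exp.comp
              ((continuous_const.mul (continuous_const.sub continuous_id)).neg : Continuous fun τ : ℝ => -(η / 2 * (t - τ))))).intervalIntegrable s t)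
        have h2 : (∫ τ in s..t, X * Real.exp (-(η / 2 * (t - τ))))
            = X * ∫ τ in s..t, Real.exp (-(η / 2 * (t - τ))) := by
          rw [← intervalIntegral.integral_const_mul]
        have h3 : (0:ℝ) ≤ ∫ τ in s..t, Real.exp (-(η / 2 * (t - τ))) :=
          intervalIntegral.integral_nonneg hst (fun τ _ => (Real.exp_pos _).le)
        have h4 := exp_iv_le1 hη2 hst
        calc ‖∫ τ in s..t, U t τ (π0 τ (f τ))‖
            ≤ |∫ τ in s..t, X * Real.exp (-(η / 2 * (t - τ)))| := h1
          _ = X * ∫ τ in s..t, Real.exp (-(η / 2 * (t - τ))) := by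
              rw [h2, abs_of_nonneg (by positivity)]
          _ ≤ X * (η / 2)⁻¹ := mul_le_mul_of_nonneg_left h4 hX0
      · have h1 : ‖∫ τ in t..s, U t τ (π0 τ (f τ))‖
            ≤ |∫ τ in t..s, X * Real.exp (-(η / 2 * (τ - t)))| := by
          apply intervalIntegral.norm_integral_le_abs_of_norm_le
          · filter_upwards [ae_restrict_mem measurableSet_uIoc] with τ hτ
            rw [Set.uIoc_of_le hts] at hτ
            have habs1 : |t - τ| = τ - t := by
              rw [abs_sub_comm]; exact abs_of_nonneg (by linarith [hτ.1])
            have habs2 : |τ - s| = s - τ := by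
              rw [abs_sub_comm]; exact abs_of_nonneg (by linarith [hτ.2])
            have habs3 : |t - s| = s - t := by
              rw [abs_sub_comm]; exact abs_of_nonneg (by linarith)
            calc ‖U t τ (π0 τ (f τ))‖ ≤ C * M * Real.exp (η / 2 * |t - τ| + η * |τ - s|) :=
                  hb0' t τ
              _ ≤ C * M * Real.exp (η * |t - s| + -(η / 2 * (τ - t))) := by
                  apply mul_le_mul_of_nonneg_left (Real.exp_le_exp.2 ?_) hCM
                  rw [habs1, habs2, habs3]; linarith
              _ = X * Real.exp (-(η / 2 * (τ - t))) := by rw [hXdef, Real.exp_add]; ring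
          · exact ((continuous_const.mul (Real.continuous_exp.comp
              ((continuous_const.mul (continuous_id.sub continuous_const)).neg : Continuous fun τ : ℝ => -(η / 2 * (τ - t))))).intervalIntegrable t s)
        have h2 : (∫ τ in t..s, X * Real.exp (-(η / 2 * (τ - t))))
            = X * ∫ τ in t..s, Real.exp (-(η / 2 * (τ - t))) := by
          rw [← intervalIntegral.integral_const_mul]
        have h3 : (0:ℝ) ≤ ∫ τ in t..s, Real.exp (-(η / 2 * (τ - t))) :=
          intervalIntegral.integral_nonneg hts (fun τ _ => (Real.exp_pos _).le)
        have h4 := exp_iv_le2 hη2 hts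
        calc ‖∫ τ in s..t, U t τ (π0 τ (f τ))‖
            = ‖∫ τ in t..s, U t τ (π0 τ (f τ))‖ := by
              rw [intervalIntegral.integral_symm, norm_neg]
          _ ≤ |∫ τ in t..s, X * Real.exp (-(η / 2 * (τ - t)))| := h1
          _ = X * ∫ τ in t..s, Real.exp (-(η / 2 * (τ - t))) := by
              rw [h2, abs_of_nonneg (by positivity)]
          _ ≤ X * (η / 2)⁻¹ := mul_le_mul_of_nonneg_left h4 hX0
    have hnorm : ‖u t‖ ≤ X * ((η / 2)⁻¹ + δp⁻¹ + δm⁻¹) := by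
      rw [hu t]
      have h5 := norm_add_le ((∫ τ in s..t, U t τ (π0 τ (f τ)))
        - ∫ τ in Set.Ici t, U t τ (πp τ (f τ))) (∫ τ in Set.Iic t, U t τ (πm τ (f τ)))
      have h6 := norm_sub_le (∫ τ in s..t, U t τ (π0 τ (f τ)))
        (∫ τ in Set.Ici t, U t τ (πp τ (f τ)))
      linarith
    have hexp1 : Real.exp (-η * |t - s|) * Real.exp (η * |t - s|) = 1 := by
      rw [← Real.exp_add]; ring_nf; exact Real.exp_zero
    calc Real.exp (-η * |t - s|) * ‖u t‖
        ≤ Real.exp (-η * |t - s|) * (X * ((η / 2)⁻¹ + δp⁻¹ + δm⁻¹)) :=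
          mul_le_mul_of_nonneg_left hnorm (Real.exp_pos _).le
      _ = (Real.exp (-η * |t - s|) * Real.exp (η * |t - s|))
          * (C * M * ((η / 2)⁻¹ + δp⁻¹ + δm⁻¹)) := by rw [hXdef]; ring
      _ = Cu := by rw [hexp1, one_mul]
  refine ⟨heq, hπ0us, ⟨Cu, hCu⟩, ?_⟩
  -- Part 4 : uniqueness
  intro v hv hvb hveq hv0
  obtain ⟨Cv, hCv⟩ := hvb
  have hub : ∀ t : ℝ, ‖u t‖ ≤ Cu * Real.exp (η * |t - s|) := hinv Cu u hCu
  have hvbd : ∀ t : ℝ, ‖v t‖ ≤ Cv * Real.exp (η * |t - s|) := hinv Cv v hCv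
  set Cw := Cv + Cu with hCwdef
  have hweq : ∀ t : ℝ, v t - u t = U t s (v s - u s) := by
    intro t
    rw [hveq t, heq t, map_sub]
    abel
  have hwb : ∀ t : ℝ, ‖v t - u t‖ ≤ Cw * Real.exp (η * |t - s|) := by
    intro t
    calc ‖v t - u t‖ ≤ ‖v t‖ + ‖u t‖ := norm_sub_le _ _
      _ ≤ Cv * Real.exp (η * |t - s|) + Cu * Real.exp (η * |t - s|) :=
          add_le_add (hvbd t) (hub t)
      _ = Cw * Real.exp (η * |t - s|) := by rw [hCwdef]; ring
  have hπ0w : π0 s (v s - u s) = 0 := by rw [map_sub, hv0, hπ0us, sub_zero]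
  have hN0 : 0 ≤ N := le_trans (norm_nonneg (πp 0)) (hN 0).2.2
  -- idempotency
  have hp_idem : ∀ t : ℝ, (πp t).comp (πp t) = πp t := by
    intro t
    have h := congrArg (fun L : (Fin n → ℝ) →L[ℝ] (Fin n → ℝ) => (πp t).comp L) (hsum t)
    simp only [ContinuousLinearMap.comp_add, (horth t).2.2.1, (horth t).2.2.2.2.1,
      ContinuousLinearMap.comp_id, zero_add] at h
    exact h
  have hm_idem : ∀ t : ℝ, (πm t).comp (πm t) = πm t := by
    intro t
    have h := congrArg (fun L : (Fin n → ℝ) →L[ℝ] (Fin n → ℝ) => (πm t).comp L) (hsum t)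
    simp only [ContinuousLinearMap.comp_add, (horth t).1, (horth t).2.2.2.2.2,
      ContinuousLinearMap.comp_id, add_zero] at h
    exact h
  -- the unstable component of w s vanishes
  have hyzero : πp s (v s - u s) = 0 := by
    set y := πp s (v s - u s) with hydef
    have key : ∀ T : ℝ, 0 ≤ T → ‖y‖ ≤ C * (N * Cw) * Real.exp (-(b - η) * T) := by
      intro T hT
      set t := s + T with htdef
      have hst : s ≤ t := by simp [htdef]; linarith
      have h1 : U t s y = πp t (v t - u t) := by
        rw [hweq t]
        calc U t s y = ((U t s).comp (πp s)) (v s - u s) := rfl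
          _ = ((πp t).comp (U t s)) (v s - u s) := by rw [(hcomm t s).2.2]
          _ = πp t (U t s (v s - u s)) := rfl
      have hidem : πp t (U t s y) = U t s y := by
        rw [h1]
        calc πp t (πp t (v t - u t)) = ((πp t).comp (πp t)) (v t - u t) := rfl
          _ = πp t (v t - u t) := by rw [hp_idem t]
      have h2 : y = ((U s t).comp (πp t)) (U t s y) := by
        calc y = (ContinuousLinearMap.id ℝ (Fin n → ℝ)) y := rfl
          _ = (U s s) y := by rw [hid]
          _ = ((U s t).comp (U t s)) y := by rw [hcocycle]
          _ = U s t (U t s y) := rfl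
          _ = U s t (πp t (U t s y)) := by rw [hidem]
          _ = ((U s t).comp (πp t)) (U t s y) := rfl
      have h3 : ‖y‖ ≤ ‖(U s t).comp (πp t)‖ * ‖U t s y‖ := by
        conv_lhs => rw [h2]
        exact ((U s t).comp (πp t)).le_opNorm _
      have h4 : ‖(U s t).comp (πp t)‖ ≤ C * Real.exp (b * (s - t)) := hCp s t hst
      have h5 : ‖U t s y‖ ≤ N * (Cw * Real.exp (η * |t - s|)) := by
        rw [h1]
        calc ‖πp t (v t - u t)‖ ≤ ‖πp t‖ * ‖v t - u t‖ := (πp t).le_opNorm _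
          _ ≤ N * (Cw * Real.exp (η * |t - s|)) :=
            mul_le_mul (hN t).2.2 (hwb t) (norm_nonneg _) hN0
      have habs : |t - s| = T := by rw [htdef]; simp [abs_of_nonneg hT]
      calc ‖y‖ ≤ (C * Real.exp (b * (s - t))) * (N * (Cw * Real.exp (η * |t - s|))) :=
            le_trans h3 (mul_le_mul h4 h5 (norm_nonneg _) (by positivity))
        _ = C * (N * Cw) * Real.exp (b * (s - t) + η * |t - s|) := by rw [Real.exp_add]; ring
        _ = C * (N * Cw) * Real.exp (-(b - η) * T) := by
            rw [habs, htdef]; ring_nf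
    have hlim : Tendsto (fun T : ℝ => C * (N * Cw) * Real.exp (-(b - η) * T)) atTop (𝓝 0) := by
      have h1 : Tendsto (fun T : ℝ => -(b - η) * T) atTop atBot := by
        have h0 : Tendsto (fun T : ℝ => (b - η) * T) atTop atTop :=
          tendsto_id.const_mul_atTop (by linarith : (0:ℝ) < b - η)
        exact (tendsto_neg_atTop_atBot.comp h0).congr
          (fun T => by simp only [Function.comp_apply]; ring)
      have h2 := Real.tendsto_exp_atBot.comp h1
      have h3 := h2.const_mul (C * (N * Cw))
      simpa using h3
    have h0 : ‖y‖ ≤ 0 :=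
      ge_of_tendsto hlim (Filter.eventually_atTop.2 ⟨0, fun T hT => key T hT⟩)
    exact norm_le_zero_iff.1 h0
  have hzzero : πm s (v s - u s) = 0 := by
    set z := πm s (v s - u s) with hzdef
    have key : ∀ T : ℝ, 0 ≤ T → ‖z‖ ≤ C * (N * Cw) * Real.exp (-(-a - η) * T) := by
      intro T hT
      set t := s - T with htdef
      have hts : t ≤ s := by simp [htdef]; linarith
      have h1 : U t s z = πm t (v t - u t) := by
        rw [hweq t]
        calc U t s z = ((U t s).comp (πm s)) (v s - u s) := rfl
          _ = ((πm t).comp (U t s)) (v s - u s) := by rw [(hcomm t s).1]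
          _ = πm t (U t s (v s - u s)) := rfl
      have hidem : πm t (U t s z) = U t s z := by
        rw [h1]
        calc πm t (πm t (v t - u t)) = ((πm t).comp (πm t)) (v t - u t) := rfl
          _ = πm t (v t - u t) := by rw [hm_idem t]
      have h2 : z = ((U s t).comp (πm t)) (U t s z) := by
        calc z = (ContinuousLinearMap.id ℝ (Fin n → ℝ)) z := rfl
          _ = (U s s) z := by rw [hid]
          _ = ((U s t).comp (U t s)) z := by rw [hcocycle]
          _ = U s t (U t s z) := rfl
          _ = U s t (πm t (U t s z)) := by rw [hidem]
          _ = ((U s t).comp (πm t)) (U t s z) := rfl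
      have h3 : ‖z‖ ≤ ‖(U s t).comp (πm t)‖ * ‖U t s z‖ := by
        conv_lhs => rw [h2]
        exact ((U s t).comp (πm t)).le_opNorm _
      have h4 : ‖(U s t).comp (πm t)‖ ≤ C * Real.exp (a * (s - t)) := hCm s t hts
      have h5 : ‖U t s z‖ ≤ N * (Cw * Real.exp (η * |t - s|)) := by
        rw [h1]
        calc ‖πm t (v t - u t)‖ ≤ ‖πm t‖ * ‖v t - u t‖ := (πm t).le_opNorm _
          _ ≤ N * (Cw * Real.exp (η * |t - s|)) :=
            mul_le_mul (hN t).1 (hwb t) (norm_nonneg _) hN0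
      have habs : |t - s| = T := by
        have : t - s = -T := by rw [htdef]; ring
        rw [this, abs_neg, abs_of_nonneg hT]
      calc ‖z‖ ≤ (C * Real.exp (a * (s - t))) * (N * (Cw * Real.exp (η * |t - s|))) :=
            le_trans h3 (mul_le_mul h4 h5 (norm_nonneg _) (by positivity))
        _ = C * (N * Cw) * Real.exp (a * (s - t) + η * |t - s|) := by rw [Real.exp_add]; ring
        _ = C * (N * Cw) * Real.exp (-(-a - η) * T) := by
            rw [habs, htdef]; ring_nf
    have hlim : Tendsto (fun T : ℝ => C * (N * Cw) * Real.exp (-(-a - η) * T)) atTop (𝓝 0) := by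
      have h1 : Tendsto (fun T : ℝ => -(-a - η) * T) atTop atBot := by
        have h0 : Tendsto (fun T : ℝ => (-a - η) * T) atTop atTop :=
          tendsto_id.const_mul_atTop (by linarith : (0:ℝ) < -a - η)
        exact (tendsto_neg_atTop_atBot.comp h0).congr
          (fun T => by simp only [Function.comp_apply]; ring)
      have h2 := Real.tendsto_exp_atBot.comp h1
      have h3 := h2.const_mul (C * (N * Cw))
      simpa using h3
    have h0 : ‖z‖ ≤ 0 :=
      ge_of_tendsto hlim (Filter.eventually_atTop.2 ⟨0, fun T hT => key T hT⟩)
    exact norm_le_zero_iff.1 h0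
  have hws : v s - u s = 0 := by
    have h := ContinuousLinearMap.ext_iff.1 (hsum s) (v s - u s)
    simp only [ContinuousLinearMap.add_apply, ContinuousLinearMap.id_apply] at h
    rw [hzzero, hπ0w, hyzero] at h
    simpa using h.symm
  funext t
  have h := hweq t
  rw [hws, map_zero] at h
  exact sub_eq_zero.1 h
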